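/- In a monotone better-response dynamics, the unweighted median of the combined profile is invariant: if at each step the moving proxy's new report stays weakly on the same side of the true median med as its true peak, then med(s^t, p|_N) = med for all t. -/
import Mathlib

def IsMedian (P : Multiset ℝ) (x : ℝ) : Prop :=
  x ∈ P ∧ 2 * (P.filter (fun y => y < x)).card ≤ P.card ∧
    2 * (P.filter (fun y => x < y)).card ≤ P.card

def combined {m n : ℕ} (s : Fin m → ℝ) (p : Fin n → ℝ) : Multiset ℝ :=
  Finset.univ.val.map s + Finset.univ.val.map p

theorem monotone_dynamics_median_invariant {m n : ℕ} (hodd : Odd (m + n))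
    (pM : Fin m → ℝ) (pN : Fin n → ℝ) (med : ℝ)
    (hmed : IsMedian (combined pM pN) med)
    (s : ℕ → Fin m → ℝ) (h0 : s 0 = pM)
    (hstep : ∀ t, ∃ j, ∀ k ≠ j, s (t + 1) k = s t k)
    (hmono : ∀ t j, (pM j ≤ med → s t j ≤ med) ∧ (med ≤ pM j → med ≤ s t j)) :
    ∀ t, IsMedian (combined (s t) pN) med := by
  intro t
  obtain ⟨hmem, hlt, hgt⟩ := hmed
  have key1 : ∀ j, s t j < med → pM j < med := by
    intro j h
    by_contra hc
    push_neg at hc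
    exact absurd ((hmono t j).2 hc) (not_le.2 h)
  have key2 : ∀ j, med < s t j → med < pM j := by
    intro j h
    by_contra hc
    push_neg at hc
    exact absurd ((hmono t j).1 hc) (not_le.2 h)
  have hc1 : ((Finset.univ.val.map (s t)).filter (fun y => y < med)).card
      ≤ ((Finset.univ.val.map pM).filter (fun y => y < med)).card := by
    rw [← Multiset.countP_eq_card_filter, ← Multiset.countP_eq_card_filter,
      Multiset.countP_map, Multiset.countP_map]
    exact Multiset.card_le_card
      (Multiset.monotone_filter_right _ (fun j h => key1 j h))
  have hc2 : ((Finset.univ.val.map (s t)).filter (fun y => med < y)).card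
      ≤ ((Finset.univ.val.map pM).filter (fun y => med < y)).card := by
    rw [← Multiset.countP_eq_card_filter, ← Multiset.countP_eq_card_filter,
      Multiset.countP_map, Multiset.countP_map]
    exact Multiset.card_le_card
      (Multiset.monotone_filter_right _ (fun j h => key2 j h))
  refine ⟨?_, ?_, ?_⟩
  · simp only [combined, Multiset.mem_add, Multiset.mem_map] at hmem ⊢
    rcases hmem with ⟨j, hju, hj⟩ | h
    · left
      have h1 := (hmono t j).1 (le_of_eq hj)
      have h2 := (hmono t j).2 (ge_of_eq hj)
      exact ⟨j, hju, le_antisymm h1 h2⟩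
    · right; exact h
  · simp only [combined, Multiset.filter_add, Multiset.card_add, Multiset.card_map] at hlt ⊢
    omega
  · simp only [combined, Multiset.filter_add, Multiset.card_add, Multiset.card_map] at hgt ⊢
    omega
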